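/- Let n ≥ 2 and let a₁, …, aₙ be positive integers. If there exists x : {1,…,n} → ℝ with |x_{i−1} − x_i| = aᵢ for all 1 < i ≤ n and |x₁ − xₙ| = a₁, then there exists a subset I ⊆ {1,…,n} with ∑_{i∈I} aᵢ = ∑_{i∉I} aᵢ. -/

import Mathlib

lemma cycle_telescope (x : ℕ → ℝ) :
    ∀ n, 1 ≤ n → ∑ i ∈ Finset.Icc 2 n, (x (i-1) - x i) = x 1 - x n := by
  intro n
  induction n with
  | zero => omega
  | succ m ih =>
    intro _
    rcases Nat.eq_zero_or_pos m with h | h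
    · subst h; simp
    · have hm : 1 ≤ m := h
      rw [show Finset.Icc 2 (m+1) = insert (m+1) (Finset.Icc 2 m) by
        ext j; simp [Finset.mem_Icc]; omega,
        Finset.sum_insert (by simp), ih hm]
      rw [show m + 1 - 1 = m from rfl]
      ring

theorem cycle_realization_yields_partition
    (n : ℕ) (hn : 2 ≤ n) (a : ℕ → ℤ)
    (hpos : ∀ i ∈ Finset.Icc 1 n, 0 < a i)
    (x : ℕ → ℝ)
    (hx : ∀ i, 1 < i → i ≤ n → |x (i - 1) - x i| = (a i : ℝ))
    (hx1n : |x 1 - x n| = (a 1 : ℝ)) :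
    ∃ I : Finset ℕ, I ⊆ Finset.Icc 1 n ∧
      ∑ i ∈ I, a i = ∑ i ∈ Finset.Icc 1 n \ I, a i := by
  set F : ℕ → ℝ := fun i => if i = 1 then x n - x 1 else x (i-1) - x i with hF
  have habs : ∀ i ∈ Finset.Icc 1 n, |F i| = (a i : ℝ) := by
    intro i hi
    simp only [Finset.mem_Icc] at hi
    by_cases h1 : i = 1
    · subst h1; simp only [hF, if_pos rfl]; rw [abs_sub_comm]; exact hx1n
    · simp only [hF, if_neg h1]
      exact hx i (by omega) hi.2
  have hsum : ∑ i ∈ Finset.Icc 1 n, F i = 0 := by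
    rw [show Finset.Icc 1 n = insert 1 (Finset.Icc 2 n) by
        ext j; simp [Finset.mem_Icc]; omega,
      Finset.sum_insert (by simp)]
    have : ∑ i ∈ Finset.Icc 2 n, F i = ∑ i ∈ Finset.Icc 2 n, (x (i-1) - x i) := by
      apply Finset.sum_congr rfl
      intro i hi
      simp only [Finset.mem_Icc] at hi
      simp [hF, show i ≠ 1 by omega]
    rw [this, cycle_telescope x n (by omega)]
    simp [hF]
  refine ⟨(Finset.Icc 1 n).filter (fun i => F i = (a i : ℝ)), Finset.filter_subset _ _, ?_⟩
  set I := (Finset.Icc 1 n).filter (fun i => F i = (a i : ℝ)) with hI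
  have hInot : ∀ i ∈ Finset.Icc 1 n \ I, F i = -(a i : ℝ) := by
    intro i hi
    rw [Finset.mem_sdiff, hI, Finset.mem_filter] at hi
    have h1 := habs i hi.1
    have h2 : F i ≠ (a i : ℝ) := fun h => hi.2 ⟨hi.1, h⟩
    rcases abs_eq (a := F i) (b := (a i : ℝ))
      (by exact_mod_cast (hpos i hi.1).le) |>.mp h1 with h | h
    · exact absurd h h2
    · exact h
  have hsplit : ∑ i ∈ I, F i + ∑ i ∈ Finset.Icc 1 n \ I, F i = 0 := by
    rw [Finset.sum_sdiff_eq_sub (Finset.filter_subset _ _)] at *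
    linarith [hsum]
  have h1 : ∑ i ∈ I, F i = ∑ i ∈ I, (a i : ℝ) := by
    apply Finset.sum_congr rfl
    intro i hi
    exact (Finset.mem_filter.mp hi).2
  have h2 : ∑ i ∈ Finset.Icc 1 n \ I, F i = -∑ i ∈ Finset.Icc 1 n \ I, (a i : ℝ) := by
    rw [← Finset.sum_neg_distrib]
    exact Finset.sum_congr rfl hInot
  rw [h1, h2] at hsplit
  have : ((∑ i ∈ I, a i : ℤ) : ℝ) = ((∑ i ∈ Finset.Icc 1 n \ I, a i : ℤ) : ℝ) := by
    push_cast
    linarith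
  exact_mod_cast this
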